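/- Let Γ be a finite group acting effectively and algebraically on an affine algebraic variety X, and let σ be a Γ-invariant locally nilpotent vector field on X. Then for a general point x ∈ X and every pair of vectors u, v ∈ T_xX such that u, v and the value σ(x) are linearly independent, there exists a Γ-invariant regular function f on X with f(x) = 0, df(u) = 0 and df(v) ≠ 0. -/

import Mathlib

/-!
STATEMENT 2 (Lemma `Gam`): Let Γ be a finite group acting effectively and algebraically
on an affine algebraic variety X, and let σ be a Γ-invariant locally nilpotent vector
field on X.  Then for a general point x ∈ X (i.e. outside a suitable proper closed
subvariety, here: outside the zero set of some nonzero regular function h) and every pair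
of vectors u, v ∈ T_xX such that u, v and σ(x) are linearly independent, there exists a
Γ-invariant regular function f on X with f(x) = 0, df(u) = 0 and df(v) ≠ 0.

Modelling conventions: X is given by its coordinate ring `A` (finitely generated,
integral, smooth -- the blanket assumption of the paper); points are ℂ-algebra
homomorphisms `A →ₐ[ℂ] ℂ`; a tangent vector at a point p is a point derivation
`u : A →ₗ[ℂ] ℂ` (so `df(u) = u f`); a vector field is a ℂ-derivation of A, it is locally
nilpotent iff it acts locally nilpotently on A (equivalently generates an algebraic
ℂ₊-action); Γ acts by algebra automorphisms, effectively = faithfully.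
-/

noncomputable section

/-- Locally nilpotent vector field (locally nilpotent derivation of `ℂ[X]`). -/
def IsLND {A : Type*} [CommRing A] [Algebra ℂ A] (ξ : Derivation ℂ A A) : Prop :=
  ∀ a : A, ∃ N : ℕ, (ξ.toLinearMap ^ N) a = 0

/-- A tangent vector of `X` at the point `p`: a point derivation at `p`. -/
def IsPointDerivation {A : Type*} [CommRing A] [Algebra ℂ A] (p : A →ₐ[ℂ] ℂ)
    (u : A →ₗ[ℂ] ℂ) : Prop :=
  ∀ a b : A, u (a * b) = p a * u b + p b * u a

/-- The value of the vector field ξ at the point p, as a tangent vector at p. -/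
def fieldAt {A : Type*} [CommRing A] [Algebra ℂ A] (p : A →ₐ[ℂ] ℂ)
    (ξ : Derivation ℂ A A) : A →ₗ[ℂ] ℂ :=
  p.toLinearMap.comp ξ.toLinearMap

lemma pd_one {A : Type*} [CommRing A] [Algebra ℂ A] {p : A →ₐ[ℂ] ℂ}
    {u : A →ₗ[ℂ] ℂ} (hu : IsPointDerivation p u) : u 1 = 0 := by
  have := hu 1 1
  simp only [mul_one, map_one, one_mul] at this
  linear_combination -this

lemma pd_algebraMap {A : Type*} [CommRing A] [Algebra ℂ A] {p : A →ₐ[ℂ] ℂ}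
    {u : A →ₗ[ℂ] ℂ} (hu : IsPointDerivation p u) (c : ℂ) :
    u (algebraMap ℂ A c) = 0 := by
  rw [Algebra.algebraMap_eq_smul_one, map_smul, pd_one hu, smul_zero]

lemma pd_ker_sq {A : Type*} [CommRing A] [Algebra ℂ A] {q : A →ₐ[ℂ] ℂ}
    {w : A →ₗ[ℂ] ℂ} (hw : IsPointDerivation q w) {x : A}
    (hx : x ∈ (RingHom.ker q) ^ 2) : w x = 0 := by
  rw [sq] at hx
  refine Submodule.mul_induction_on hx (fun m hm n hn => ?_) (fun a b ha hb => ?_)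
  · rw [hw m n, RingHom.mem_ker.mp hm, RingHom.mem_ker.mp hn]
    ring
  · rw [map_add, ha, hb, add_zero]


theorem statement2 (A : Type) [CommRing A] [IsDomain A] [Algebra ℂ A]
    (hfg : Algebra.FiniteType ℂ A) (hsmooth : Algebra.FormallySmooth ℂ A)
    (Γ : Type) [Group Γ] [Finite Γ] (actΓ : Γ →* (A ≃ₐ[ℂ] A))
    (heff : Function.Injective actΓ)
    (σ : Derivation ℂ A A) (hσ : IsLND σ)
    (hσinv : ∀ (γ : Γ) (a : A), actΓ γ (σ a) = σ (actΓ γ a)) :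
    ∃ h : A, h ≠ 0 ∧
      ∀ p : A →ₐ[ℂ] ℂ, p h ≠ 0 →
        ∀ u v : A →ₗ[ℂ] ℂ, IsPointDerivation p u → IsPointDerivation p v →
          LinearIndependent ℂ ![u, v, fieldAt p σ] →
          ∃ f : A, (∀ γ : Γ, actΓ γ f = f) ∧ p f = 0 ∧ u f = 0 ∧ v f ≠ 0 := by
  classical
  obtain ⟨_⟩ := nonempty_fintype Γ
  -- choose witnesses of effectiveness
  have key : ∀ γ : Γ, γ ≠ 1 → ∃ a : A, actΓ γ a ≠ a := by
    intro γ hγ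
    by_contra hc
    push_neg at hc
    exact hγ (heff (by ext a; simpa using hc a))
  set aa : Γ → A := fun γ => if h : γ = 1 then 0 else (key γ h).choose with haa_def
  have haa : ∀ γ : Γ, γ ≠ 1 → actΓ γ (aa γ) ≠ aa γ := by
    intro γ hγ
    simp only [haa_def, dif_neg hγ]
    exact (key γ hγ).choose_spec
  set s : Finset Γ := Finset.univ.filter (· ≠ 1) with hs_def
  refine ⟨∏ γ ∈ s, (actΓ γ (aa γ) - aa γ), ?_, ?_⟩
  · rw [Finset.prod_ne_zero_iff]
    intro γ hγ
    have hγ1 : γ ≠ 1 := by simpa [hs_def] using hγ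
    exact sub_ne_zero.mpr (haa γ hγ1)
  intro p hp u v hu hv hLI
  -- the orbit points
  set q : Γ → (A →ₐ[ℂ] ℂ) := fun γ => p.comp (actΓ γ).toAlgHom with hq_def
  have hq_apply : ∀ γ a, q γ a = p (actΓ γ a) := fun γ a => rfl
  have hfac : ∀ γ ∈ s, p (actΓ γ (aa γ) - aa γ) ≠ 0 := by
    intro γ hγ h0
    exact hp (by rw [map_prod]; exact Finset.prod_eq_zero hγ h0)
  have hqne : ∀ γ : Γ, γ ≠ 1 → q γ ≠ p := by
    intro γ hγ hqp
    have hγs : γ ∈ s := by simp [hs_def, hγ]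
    apply hfac γ hγs
    rw [map_sub, sub_eq_zero, ← hq_apply, hqp]
  -- kernels
  set M : Ideal A := RingHom.ker p with hM_def
  set Mγ : Γ → Ideal A := fun γ => RingHom.ker (q γ) with hMγ_def
  have hsurj : ∀ r : A →ₐ[ℂ] ℂ, Function.Surjective r := by
    intro r c; exact ⟨algebraMap ℂ A c, r.commutes c⟩
  have hMmax : M.IsMaximal := RingHom.ker_isMaximal_of_surjective p (hsurj p)
  have hMγmax : ∀ γ, (Mγ γ).IsMaximal :=
    fun γ => RingHom.ker_isMaximal_of_surjective (q γ) (hsurj (q γ))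
  have hkerne : ∀ γ : Γ, γ ≠ 1 → Mγ γ ≠ M := by
    intro γ hγ he
    apply hqne γ hγ
    ext a
    have ha : a - algebraMap ℂ A (p a) ∈ M := by
      simp [hM_def, RingHom.mem_ker]
    have ha' : a - algebraMap ℂ A (p a) ∈ Mγ γ := he ▸ ha
    have := RingHom.mem_ker.mp ha'
    rw [map_sub, sub_eq_zero] at this
    rw [this, AlgHom.commutes]
    simp
  set J : Ideal A := ⨅ γ ∈ s, (Mγ γ) ^ 2 with hJ_def
  have hJle : ∀ γ : Γ, γ ≠ 1 → J ≤ (Mγ γ) ^ 2 := by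
    intro γ hγ
    intro x hx
    simp only [hJ_def, Submodule.mem_iInf] at hx
    exact hx γ (by simp [hs_def, hγ])
  have hcop : IsCoprime (M ^ 2) J := by
    apply Ideal.isCoprime_biInf
    intro γ hγ
    have hγ1 : γ ≠ 1 := by simpa [hs_def] using hγ
    exact ((Ideal.isCoprime_iff_sup_eq.mpr ((hMmax.coprime_of_ne (hMγmax γ)) (Ne.symm (hkerne γ hγ1)))).pow)
  obtain ⟨n, hn, j, hj, hnj⟩ := Ideal.isCoprime_iff_exists.mp hcop
  -- decomposition M = (M ⊓ J) + M^2
  have hdecomp : ∀ x ∈ M, ∃ a ∈ M ⊓ J, ∃ m ∈ M ^ 2, x = a + m := by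
    intro x hx
    refine ⟨x * j, Ideal.mem_inf.mpr ⟨Ideal.mul_mem_right _ _ hx, Ideal.mul_mem_left _ _ hj⟩,
      x * n, Ideal.mul_mem_left _ _ hn, ?_⟩
    rw [← mul_add, add_comm j n, hnj, mul_one]
  -- key claim: find a ∈ M ⊓ J with u a = 0, v a ≠ 0
  have hclaim : ∃ a ∈ M ⊓ J, u a = 0 ∧ v a ≠ 0 := by
    by_contra hcon
    push_neg at hcon
    -- then v = c • u on M ⊓ J for some c
    have hc : ∃ c : ℂ, ∀ a ∈ M ⊓ J, v a = c * u a := by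
      by_cases hex : ∃ a0 ∈ M ⊓ J, u a0 ≠ 0
      · obtain ⟨a0, ha0, hua0⟩ := hex
        refine ⟨v a0 / u a0, fun a ha => ?_⟩
        set b : A := a - algebraMap ℂ A (u a / u a0) * a0 with hb_def
        have hbmem : b ∈ M ⊓ J := by
          exact Submodule.sub_mem _ ha (Ideal.mul_mem_left _ _ ha0)
        have humul : ∀ (w : A →ₗ[ℂ] ℂ), IsPointDerivation p w →
            w (algebraMap ℂ A (u a / u a0) * a0) = (u a / u a0) * w a0 := by
          intro w hw
          rw [hw, AlgHom.commutes, pd_algebraMap hw, mul_zero, add_zero]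
          simp
        have hub : u b = 0 := by
          rw [hb_def, map_sub, humul u hu]
          field_simp; ring
        have hvb : v b = 0 := hcon b hbmem hub
        rw [hb_def, map_sub, humul v hv, sub_eq_zero] at hvb
        rw [hvb]; field_simp
      · push_neg at hex
        refine ⟨0, fun a ha => ?_⟩
        rw [hcon a ha (hex a ha), zero_mul]
    obtain ⟨c, hc⟩ := hc
    -- then v = c • u on all of A
    have hall : ∀ x : A, v x = c * u x := by
      intro x
      have hxM : x - algebraMap ℂ A (p x) ∈ M := by simp [hM_def, RingHom.mem_ker]
      obtain ⟨a, ha, m, hm, hxam⟩ := hdecomp _ hxM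
      have hx' : x = a + m + algebraMap ℂ A (p x) := by rw [← hxam]; ring
      rw [hx']
      simp only [map_add, pd_algebraMap hu, pd_algebraMap hv,
        pd_ker_sq hu hm, pd_ker_sq hv hm, add_zero]
      exact hc a ha
    -- contradiction with linear independence
    have h0 : ∑ i : Fin 3, (![c, -1, 0] : Fin 3 → ℂ) i • (![u, v, fieldAt p σ]) i = 0 := by
      ext x
      simp [Fin.sum_univ_three, hall x]
    have := Fintype.linearIndependent_iff.mp hLI ![c, -1, 0] h0 1
    simp at this
  obtain ⟨a, haMJ, hua, hva⟩ := hclaim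
  obtain ⟨haM, haJ⟩ := Ideal.mem_inf.mp haMJ
  -- the averaged function
  refine ⟨∑ γ : Γ, actΓ γ a, ?_, ?_, ?_, ?_⟩
  · intro δ
    rw [map_sum]
    refine Fintype.sum_equiv (Equiv.mulLeft δ) _ _ (fun γ => ?_)
    show actΓ δ (actΓ γ a) = actΓ (δ * γ) a
    rw [map_mul, AlgEquiv.mul_apply]
  · rw [map_sum]
    refine Finset.sum_eq_zero (fun γ _ => ?_)
    by_cases hγ : γ = 1
    · subst hγ
      simpa using RingHom.mem_ker.mp haM
    · have : a ∈ Mγ γ := Ideal.pow_le_self two_ne_zero (hJle γ hγ haJ)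
      exact RingHom.mem_ker.mp this
  · rw [map_sum]
    refine Finset.sum_eq_zero (fun γ _ => ?_)
    by_cases hγ : γ = 1
    · subst hγ; simpa using hua
    · have hpd : IsPointDerivation (q γ) (u ∘ₗ (actΓ γ).toLinearMap) := by
        intro x y
        simp only [LinearMap.comp_apply, AlgEquiv.toLinearMap_apply, map_mul]
        exact hu _ _
      exact pd_ker_sq hpd (hJle γ hγ haJ)
  · rw [map_sum, Finset.sum_eq_single_of_mem 1 (Finset.mem_univ 1) (fun γ _ hγ => ?_)]
    · simpa using hva
    · have hpd : IsPointDerivation (q γ) (v ∘ₗ (actΓ γ).toLinearMap) := by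
        intro x y
        simp only [LinearMap.comp_apply, AlgEquiv.toLinearMap_apply, map_mul]
        exact hv _ _
      exact pd_ker_sq hpd (hJle γ hγ haJ)
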